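/- Every regular language is generated by a star-controlled GCID system of size (2; 2, 0, 1; 2, 0, 0) whose initial component C1 is also its only final component. -/

import Mathlib

/-!
Graph-controlled insertion-deletion (GCID) systems.

Symbols are drawn from the universal symbol set `ℕ`, strings are lists of
symbols.  A GCID system `Π = (k, V, T, A, H, i0, F, R)` has `k` components;
rules `(i, r, j)` move a string from component `i` to component `j`, where
`r` is an insertion rule `(u, η, v)_I` (rewriting `uv → uηv`) or a deletion
rule `(u, δ, v)_D` (rewriting `uδv → uv`), with `u, v ∈ V*` and `η, δ ∈ V⁺`.
-/

namespace GCIDPaper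

/-- Strings over the universal symbol set `ℕ`. -/
abbrev Word : Type := List ℕ

/-- An insertion rule `(u, s, v)_I` (when `isInsertion = true`) or a deletion
rule `(u, s, v)_D` (when `isInsertion = false`), with left context `lctx = u`,
inserted resp. deleted string `core = s`, and right context `rctx = v`. -/
structure InsDelRule : Type where
  isInsertion : Bool
  lctx : Word
  core : Word
  rctx : Word
  deriving DecidableEq

/-- The insertion rule `(u, η, v)_I`. -/
def insRule (u η v : Word) : InsDelRule := ⟨true, u, η, v⟩

/-- The deletion rule `(u, δ, v)_D`. -/
def delRule (u δ v : Word) : InsDelRule := ⟨false, u, δ, v⟩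

/-- Applying a rule to a string: the insertion rule `(u, η, v)_I` corresponds
to the rewriting `uv → uηv`, the deletion rule `(u, δ, v)_D` to `uδv → uv`. -/
def InsDelRule.Applies (r : InsDelRule) (w w' : Word) : Prop :=
  (r.isInsertion = true →
    ∃ x y, w = x ++ r.lctx ++ r.rctx ++ y ∧
      w' = x ++ r.lctx ++ r.core ++ r.rctx ++ y) ∧
  (r.isInsertion = false →
    ∃ x y, w = x ++ r.lctx ++ r.core ++ r.rctx ++ y ∧
      w' = x ++ r.lctx ++ r.rctx ++ y)

/-- A graph-controlled insertion-deletion system.  The components are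
numbered `1, …, k`; `i0` is the initial component, `F` the set of final
components, `axioms` the finite set of axioms (placed in component `i0`),
and `R` the finite set of rules `(i, r, j)`. -/
structure System : Type where
  k : ℕ
  V : Finset ℕ
  T : Finset ℕ
  axioms : Finset Word
  i0 : ℕ
  F : Finset ℕ
  R : Finset (ℕ × InsDelRule × ℕ)
  k_pos : 1 ≤ k
  T_sub_V : T ⊆ V
  axioms_over_V : ∀ w ∈ axioms, ∀ a ∈ w, a ∈ V
  i0_mem : i0 ∈ Finset.Icc 1 k
  F_sub : F ⊆ Finset.Icc 1 k
  R_wf : ∀ q ∈ R, q.1 ∈ Finset.Icc 1 k ∧ q.2.2 ∈ Finset.Icc 1 k ∧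
    q.2.1.core ≠ [] ∧ (∀ a ∈ q.2.1.lctx, a ∈ V) ∧
    (∀ a ∈ q.2.1.core, a ∈ V) ∧ (∀ a ∈ q.2.1.rctx, a ∈ V)

/-- One derivation step between configurations: `(w)_i ⇒ (w')_j` if some rule
`(i, r, j)` of the system applied to `w` yields `w'`. -/
def Step (S : System) (c c' : Word × ℕ) : Prop :=
  ∃ q ∈ S.R, q.1 = c.2 ∧ q.2.2 = c'.2 ∧ q.2.1.Applies c.1 c'.1

/-- The reflexive-transitive closure `⇒*` of the step relation. -/
def Derives (S : System) : Word × ℕ → Word × ℕ → Prop :=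
  Relation.ReflTransGen (Step S)

/-- The language generated:
`L(Π) = { w ∈ T* : (x)_{i0} ⇒* (w)_{i_f} for some axiom x and some i_f ∈ F }`. -/
def language (S : System) : Set Word :=
  { w | (∀ a ∈ w, a ∈ S.T) ∧
    ∃ x ∈ S.axioms, ∃ f ∈ S.F, Derives S (x, S.i0) (w, f) }

/-- A single rule obeys the size bounds `(n, i', i''; m, j', j'')`. -/
def InsDelRule.SizeLE (r : InsDelRule) (n i' i'' m j' j'' : ℕ) : Prop :=
  (r.isInsertion = true →
    r.core.length ≤ n ∧ r.lctx.length ≤ i' ∧ r.rctx.length ≤ i'') ∧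
  (r.isInsertion = false →
    r.core.length ≤ m ∧ r.lctx.length ≤ j' ∧ r.rctx.length ≤ j'')

/-- The system has size `(k; n, i', i''; m, j', j'')`. -/
def HasSize (S : System) (k n i' i'' m j' j'' : ℕ) : Prop :=
  S.k = k ∧ ∀ q ∈ S.R, q.2.1.SizeLE n i' i'' m j' j''

/-- Star-controlled: the underlying undirected control graph (with an edge
`{Ci, Cj}` whenever there is a rule `(i, r, j)`) has exactly the edge set
`{ {C1, Ci} : 2 ≤ i ≤ k }`; in particular there are no loops. -/
def StarControlled (S : System) : Prop :=
  (∀ q ∈ S.R, ∃ i ∈ Finset.Icc 2 S.k, ({q.1, q.2.2} : Finset ℕ) = {1, i}) ∧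
  (∀ i ∈ Finset.Icc 2 S.k, ∃ q ∈ S.R, ({q.1, q.2.2} : Finset ℕ) = {1, i})

/-- The class `GCID(k; n, i', i''; m, j', j'')` of languages generated by GCID
systems of the given size. -/
def GCIDClass (k n i' i'' m j' j'' : ℕ) : Set (Set Word) :=
  { L | ∃ S : System, HasSize S k n i' i'' m j' j'' ∧ language S = L }

/-- The class `GCID_S(k; n, i', i''; m, j', j'')` of languages generated by
star-controlled GCID systems of the given size. -/
def GCID_S (k n i' i'' m j' j'' : ℕ) : Set (Set Word) :=
  { L | ∃ S : System, StarControlled S ∧ HasSize S k n i' i'' m j' j'' ∧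
    language S = L }


section ListSplit

theorem split_one {α} {c : α} : ∀ (u : List α) {x y t : List α},
    x ++ c :: y = u ++ t → c ∉ u → ∃ x', x = u ++ x' ∧ t = x' ++ c :: y := by
  intro u
  induction u with
  | nil => intro x y t h _; exact ⟨x, by simp, by simpa using h.symm⟩
  | cons b u ih =>
    intro x y t h hc
    cases x with
    | nil =>
      simp at h
      exact absurd (h.1 ▸ (List.mem_cons_self : b ∈ b :: u)) hc
    | cons a x =>
      simp at h
      obtain ⟨x', h1, h2⟩ := ih h.2 (fun hm => hc (List.mem_cons_of_mem _ hm))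
      exact ⟨x', by simp [h.1, h1], h2⟩

theorem split_two {α} {c₁ c₂ : α} : ∀ (u : List α) {x y t : List α},
    x ++ c₁ :: c₂ :: y = u ++ t → c₂ ∉ u →
    (∃ x', x = u ++ x' ∧ t = x' ++ c₁ :: c₂ :: y) ∨ (u = x ++ [c₁] ∧ t = c₂ :: y) := by
  intro u
  induction u with
  | nil => intro x y t h _; exact Or.inl ⟨x, by simp, by simpa using h.symm⟩
  | cons b u ih =>
    intro x y t h hc
    cases x with
    | nil =>
      simp at h
      obtain ⟨hb, h2⟩ := h
      have h2' : ([] : List α) ++ c₂ :: y = u ++ t := by simpa using h2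
      obtain ⟨x', hx1, hx2⟩ := split_one u h2' (fun hm => hc (List.mem_cons_of_mem _ hm))
      obtain rfl : u = [] := by
        cases u with
        | nil => rfl
        | cons z u => simp at hx1
      right
      refine ⟨by simp [hb], ?_⟩
      have hx0 : x' = [] := by simpa using hx1.symm
      simpa [hx0] using hx2
    | cons a x =>
      simp at h
      rcases ih h.2 (fun hm => hc (List.mem_cons_of_mem _ hm)) with ⟨x', h1, h2⟩ | ⟨h1, h2⟩
      · exact Or.inl ⟨x', by simp [h.1, h1], h2⟩
      · exact Or.inr ⟨by simp [h.1, h1], h2⟩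

end ListSplit

section Markers

/-- Marker symbols, guaranteed to lie outside `T`. -/
def mk' (T : Finset ℕ) (t q a : ℕ) : ℕ := (T.sup id) + 1 + Nat.pair t (Nat.pair q a)

theorem mk'_not_mem (T : Finset ℕ) (t q a : ℕ) : mk' T t q a ∉ T := by
  intro h
  have h2 : id (mk' T t q a) ≤ T.sup id := Finset.le_sup h
  simp only [id, mk'] at h2
  omega

@[simp] theorem mk'_inj {T : Finset ℕ} {t q a t' q' a' : ℕ} :
    mk' T t q a = mk' T t' q' a' ↔ t = t' ∧ q = q' ∧ a = a' := by
  simp [mk', Nat.pair_eq_pair]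

variable {σ : Type} [Fintype σ]

noncomputable def st (q : σ) : ℕ := ((Fintype.equivFin σ) q : ℕ)

@[simp] theorem st_inj {q q' : σ} : st q = st q' ↔ q = q' :=
  ⟨fun h => (Fintype.equivFin σ).injective (Fin.val_injective h), fun h => h ▸ rfl⟩

noncomputable def dol (T : Finset ℕ) (q : σ) : ℕ := mk' T 0 (st q) 0
noncomputable def xo (T : Finset ℕ) (q : σ) (a : ℕ) : ℕ := mk' T 1 (st q) a
noncomputable def xt (T : Finset ℕ) (q : σ) (a : ℕ) : ℕ := mk' T 2 (st q) a
noncomputable def vv (T : Finset ℕ) (q : σ) : ℕ := mk' T 3 (st q) 0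
noncomputable def dum (T : Finset ℕ) : ℕ := mk' T 4 0 0

variable {T : Finset ℕ} {q q' : σ} {a a' : ℕ}

@[simp] theorem dol_not_mem : dol T q ∉ T := mk'_not_mem _ _ _ _
@[simp] theorem xo_not_mem : xo T q a ∉ T := mk'_not_mem _ _ _ _
@[simp] theorem xt_not_mem : xt T q a ∉ T := mk'_not_mem _ _ _ _
@[simp] theorem vv_not_mem : vv T q ∉ T := mk'_not_mem _ _ _ _
@[simp] theorem dum_not_mem : dum T ∉ T := mk'_not_mem _ _ _ _

@[simp] theorem dol_inj : dol T q = dol T q' ↔ q = q' := by simp [dol]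
@[simp] theorem xo_inj : xo T q a = xo T q' a' ↔ q = q' ∧ a = a' := by simp [xo]
@[simp] theorem xt_inj : xt T q a = xt T q' a' ↔ q = q' ∧ a = a' := by simp [xt]
@[simp] theorem vv_inj : vv T q = vv T q' ↔ q = q' := by simp [vv]

@[simp] theorem dol_ne_xo : dol T q ≠ xo T q' a' := by simp [dol, xo]
@[simp] theorem xo_ne_dol : xo T q a ≠ dol T q' := by simp [dol, xo]
@[simp] theorem dol_ne_xt : dol T q ≠ xt T q' a' := by simp [dol, xt]
@[simp] theorem xt_ne_dol : xt T q a ≠ dol T q' := by simp [dol, xt]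
@[simp] theorem dol_ne_vv : dol T q ≠ vv T q' := by simp [dol, vv]
@[simp] theorem vv_ne_dol : vv T q ≠ dol T q' := by simp [dol, vv]
@[simp] theorem dol_ne_dum : dol T q ≠ dum T := by simp [dol, dum]
@[simp] theorem dum_ne_dol : dum T ≠ dol T q := by simp [dol, dum]
@[simp] theorem xo_ne_xt : xo T q a ≠ xt T q' a' := by simp [xo, xt]
@[simp] theorem xt_ne_xo : xt T q a ≠ xo T q' a' := by simp [xo, xt]
@[simp] theorem xo_ne_vv : xo T q a ≠ vv T q' := by simp [xo, vv]
@[simp] theorem vv_ne_xo : vv T q ≠ xo T q' a' := by simp [xo, vv]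
@[simp] theorem xo_ne_dum : xo T q a ≠ dum T := by simp [xo, dum]
@[simp] theorem dum_ne_xo : dum T ≠ xo T q a := by simp [xo, dum]
@[simp] theorem xt_ne_vv : xt T q a ≠ vv T q' := by simp [xt, vv]
@[simp] theorem vv_ne_xt : vv T q ≠ xt T q' a' := by simp [xt, vv]
@[simp] theorem xt_ne_dum : xt T q a ≠ dum T := by simp [xt, dum]
@[simp] theorem dum_ne_xt : dum T ≠ xt T q a := by simp [xt, dum]
@[simp] theorem vv_ne_dum : vv T q ≠ dum T := by simp [vv, dum]
@[simp] theorem dum_ne_vv : dum T ≠ vv T q := by simp [vv, dum]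

end Markers
section Construction

open Finset

variable {σ : Type} [Fintype σ]

/-- Junk words: every symbol is a terminal or an `xt`-marker. -/
def JunkW (σ : Type) [Fintype σ] (T : Finset ℕ) (u : Word) : Prop :=
  ∀ s ∈ u, s ∈ T ∨ ∃ (q : σ) (a : ℕ), s = xt T q a

variable {T : Finset ℕ}

theorem junkW_nil : JunkW σ T [] := by intro s hs; simp at hs

theorem junkW_append_mem {u : Word} {a : ℕ} (hu : JunkW σ T u) (ha : a ∈ T) :
    JunkW σ T (u ++ [a]) := by
  intro s hs
  rcases List.mem_append.1 hs with h | h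
  · exact hu s h
  · simp at h; exact Or.inl (h ▸ ha)

theorem junkW_append_xt {u : Word} {q : σ} {a : ℕ} (hu : JunkW σ T u) :
    JunkW σ T (u ++ [xt T q a]) := by
  intro s hs
  rcases List.mem_append.1 hs with h | h
  · exact hu s h
  · simp at h; exact Or.inr ⟨q, a, h⟩

theorem dol_not_mem_junk {u : Word} {q : σ} (hu : JunkW σ T u) : dol T q ∉ u := by
  intro hm
  rcases hu _ hm with h | ⟨q', a', h⟩
  · exact dol_not_mem h
  · exact dol_ne_xt h

theorem xo_not_mem_junk {u : Word} {q : σ} {a : ℕ} (hu : JunkW σ T u) : xo T q a ∉ u := by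
  intro hm
  rcases hu _ hm with h | ⟨q', a', h⟩
  · exact xo_not_mem h
  · exact xo_ne_xt h

theorem vv_not_mem_junk {u : Word} {q : σ} (hu : JunkW σ T u) : vv T q ∉ u := by
  intro hm
  rcases hu _ hm with h | ⟨q', a', h⟩
  · exact vv_not_mem h
  · exact vv_ne_xt h

theorem dum_not_mem_junk {u : Word} (hu : JunkW σ T u) : dum T ∉ u := by
  intro hm
  rcases hu _ hm with h | ⟨q', a', h⟩
  · exact dum_not_mem h
  · exact dum_ne_xt h

/-- Remove all non-terminal symbols. -/
def strip (T : Finset ℕ) (u : Word) : Word := u.filter (fun s => decide (s ∈ T))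

@[simp] theorem strip_nil : strip T [] = [] := rfl

theorem strip_append_mem {u : Word} {a : ℕ} (ha : a ∈ T) :
    strip T (u ++ [a]) = strip T u ++ [a] := by simp [strip, ha]

theorem strip_append_not_mem {u : Word} {a : ℕ} (ha : a ∉ T) :
    strip T (u ++ [a]) = strip T u := by simp [strip, ha]

theorem strip_eq_self {u : Word} (h : ∀ s ∈ u, s ∈ T) : strip T u = u :=
  List.filter_eq_self.2 (fun s hs => by simpa using h s hs)

/-- The rules of the simulating system. -/
noncomputable def rA1 (T : Finset ℕ) (q : σ) (a : ℕ) : ℕ × InsDelRule × ℕ :=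
  (1, insRule [] [xo T q a, xt T q a] [dol T q], 2)
noncomputable def rA2 (T : Finset ℕ) (q : σ) (a : ℕ) : ℕ × InsDelRule × ℕ :=
  (2, delRule [] [xt T q a, dol T q] [], 1)
noncomputable def rA3 (T : Finset ℕ) (M : DFA ℕ σ) (q : σ) (a : ℕ) : ℕ × InsDelRule × ℕ :=
  (1, insRule [] [a, dol T (M.step q a)] [xo T q a], 2)
noncomputable def rA4 (T : Finset ℕ) (q : σ) (a : ℕ) : ℕ × InsDelRule × ℕ :=
  (2, delRule [] [xo T q a] [], 1)
noncomputable def rB1 (T : Finset ℕ) (q : σ) : ℕ × InsDelRule × ℕ :=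
  (1, insRule [] [vv T q] [dol T q], 2)
noncomputable def rB2 (T : Finset ℕ) (q : σ) : ℕ × InsDelRule × ℕ :=
  (2, delRule [] [vv T q, dol T q] [], 1)
noncomputable def rDum (T : Finset ℕ) : ℕ × InsDelRule × ℕ :=
  (1, insRule [] [dum T] [dum T], 2)

open Classical in
noncomputable def Rs (T : Finset ℕ) (M : DFA ℕ σ) : Finset (ℕ × InsDelRule × ℕ) :=
  ((univ ×ˢ T : Finset (σ × ℕ)).image fun p => rA1 T p.1 p.2) ∪
  ((univ ×ˢ T : Finset (σ × ℕ)).image fun p => rA2 T p.1 p.2) ∪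
  ((univ ×ˢ T : Finset (σ × ℕ)).image fun p => rA3 T M p.1 p.2) ∪
  ((univ ×ˢ T : Finset (σ × ℕ)).image fun p => rA4 T p.1 p.2) ∪
  (((univ : Finset σ).filter (· ∈ M.accept)).image fun q => rB1 T q) ∪
  (((univ : Finset σ).filter (· ∈ M.accept)).image fun q => rB2 T q) ∪ {rDum T}

theorem mem_Rs {M : DFA ℕ σ} {r : ℕ × InsDelRule × ℕ} :
    r ∈ Rs T M ↔
      (∃ (q : σ) (a : ℕ), a ∈ T ∧ r = rA1 T q a) ∨ (∃ (q : σ) (a : ℕ), a ∈ T ∧ r = rA2 T q a) ∨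
      (∃ (q : σ) (a : ℕ), a ∈ T ∧ r = rA3 T M q a) ∨ (∃ (q : σ) (a : ℕ), a ∈ T ∧ r = rA4 T q a) ∨
      (∃ q : σ, q ∈ M.accept ∧ r = rB1 T q) ∨ (∃ q : σ, q ∈ M.accept ∧ r = rB2 T q) ∨
      r = rDum T := by
  classical
  simp only [Rs, Finset.mem_union, Finset.mem_image, Finset.mem_product, Finset.mem_univ,
    true_and, Finset.mem_filter, Finset.mem_singleton, Prod.exists]
  constructor
  · rintro (((((( ⟨q,a,ha,h⟩ | ⟨q,a,ha,h⟩ ) | ⟨q,a,ha,h⟩ ) | ⟨q,a,ha,h⟩ ) | ⟨q,hq,h⟩ ) | ⟨q,hq,h⟩ ) | h)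
    · exact Or.inl ⟨q, a, ha, h.symm⟩
    · exact Or.inr (Or.inl ⟨q, a, ha, h.symm⟩)
    · exact Or.inr (Or.inr (Or.inl ⟨q, a, ha, h.symm⟩))
    · exact Or.inr (Or.inr (Or.inr (Or.inl ⟨q, a, ha, h.symm⟩)))
    · exact Or.inr (Or.inr (Or.inr (Or.inr (Or.inl ⟨q, hq, h.symm⟩))))
    · exact Or.inr (Or.inr (Or.inr (Or.inr (Or.inr (Or.inl ⟨q, hq, h.symm⟩)))))
    · exact Or.inr (Or.inr (Or.inr (Or.inr (Or.inr (Or.inr h)))))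
  · rintro ( ⟨q,a,ha,rfl⟩ | ⟨q,a,ha,rfl⟩ | ⟨q,a,ha,rfl⟩ | ⟨q,a,ha,rfl⟩ | ⟨q,hq,rfl⟩ | ⟨q,hq,rfl⟩ | rfl)
    · exact Or.inl (Or.inl (Or.inl (Or.inl (Or.inl (Or.inl ⟨q, a, ha, rfl⟩)))))
    · exact Or.inl (Or.inl (Or.inl (Or.inl (Or.inl (Or.inr ⟨q, a, ha, rfl⟩)))))
    · exact Or.inl (Or.inl (Or.inl (Or.inl (Or.inr ⟨q, a, ha, rfl⟩))))
    · exact Or.inl (Or.inl (Or.inl (Or.inr ⟨q, a, ha, rfl⟩)))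
    · exact Or.inl (Or.inl (Or.inr ⟨q, hq, rfl⟩))
    · exact Or.inl (Or.inr ⟨q, hq, rfl⟩)
    · exact Or.inr rfl

/-- The symbol set. -/
noncomputable def Vs (σ : Type) [Fintype σ] (T : Finset ℕ) : Finset ℕ :=
  T ∪ ((univ : Finset σ).image (dol T)) ∪
  ((univ ×ˢ T).image fun p : σ × ℕ => xo T p.1 p.2) ∪
  ((univ ×ˢ T).image fun p : σ × ℕ => xt T p.1 p.2) ∪
  ((univ : Finset σ).image (vv T)) ∪ {dum T}

theorem mem_Vs_of_mem {x : ℕ} (h : x ∈ T) : x ∈ Vs σ T := by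
  simp [Vs]
  try tauto

theorem dol_mem_Vs {q : σ} : dol T q ∈ Vs σ T := by
  simp [Vs]
  try tauto

theorem xo_mem_Vs {q : σ} {a : ℕ} (ha : a ∈ T) : xo T q a ∈ Vs σ T := by
  simp [Vs]
  try tauto

theorem xt_mem_Vs {q : σ} {a : ℕ} (ha : a ∈ T) : xt T q a ∈ Vs σ T := by
  simp [Vs]
  try tauto

theorem vv_mem_Vs {q : σ} : vv T q ∈ Vs σ T := by
  simp [Vs]
  try tauto

theorem dum_mem_Vs : dum T ∈ Vs σ T := by
  simp [Vs]

end Construction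
section ShapesAndSystem

open Finset

variable {σ : Type} [Fintype σ] {T : Finset ℕ}

theorem insRule_applies_iff {η v w w' : Word} :
    (insRule [] η v).Applies w w' ↔ ∃ x y, w = x ++ v ++ y ∧ w' = x ++ η ++ v ++ y := by
  constructor
  · rintro ⟨h1, -⟩
    obtain ⟨x, y, e1, e2⟩ := h1 rfl
    exact ⟨x, y, by simpa [insRule] using e1, by simpa [insRule] using e2⟩
  · rintro ⟨x, y, e1, e2⟩
    exact ⟨fun _ => ⟨x, y, by simpa [insRule] using e1, by simpa [insRule] using e2⟩,
      fun h => by simp [insRule] at h⟩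

theorem delRule_applies_iff {δ w w' : Word} :
    (delRule [] δ []).Applies w w' ↔ ∃ x y, w = x ++ δ ++ y ∧ w' = x ++ y := by
  constructor
  · rintro ⟨-, h2⟩
    obtain ⟨x, y, e1, e2⟩ := h2 rfl
    exact ⟨x, y, by simpa [delRule] using e1, by simpa [delRule] using e2⟩
  · rintro ⟨x, y, e1, e2⟩
    exact ⟨fun h => by simp [delRule] at h,
      fun _ => ⟨x, y, by simpa [delRule] using e1, by simpa [delRule] using e2⟩⟩

theorem ins_localize {core : Word} {key : ℕ} {w w' u t : Word}
    (happ : (insRule [] core [key]).Applies w w')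
    (hw : w = u ++ t) (hkey : key ∉ u) :
    ∃ x' y, t = x' ++ key :: y ∧ w' = (u ++ x') ++ core ++ key :: y := by
  obtain ⟨x, y, e1, e2⟩ := insRule_applies_iff.1 happ
  have h : x ++ key :: y = u ++ t := by
    rw [← hw]; simpa using e1.symm
  obtain ⟨x', hx, ht⟩ := split_one u h hkey
  exact ⟨x', y, ht, by simp [e2, hx]⟩

theorem del1_localize {c₁ : ℕ} {w w' u t : Word}
    (happ : (delRule [] [c₁] []).Applies w w')
    (hw : w = u ++ t) (hc : c₁ ∉ u) :
    ∃ x' y, t = x' ++ c₁ :: y ∧ w' = (u ++ x') ++ y := by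
  obtain ⟨x, y, e1, e2⟩ := delRule_applies_iff.1 happ
  have h : x ++ c₁ :: y = u ++ t := by
    rw [← hw]; simpa using e1.symm
  obtain ⟨x', hx, ht⟩ := split_one u h hc
  exact ⟨x', y, ht, by simp [e2, hx]⟩

theorem del2_localize {c₁ c₂ : ℕ} {w w' u t : Word}
    (happ : (delRule [] [c₁, c₂] []).Applies w w')
    (hw : w = u ++ t) (hc : c₂ ∉ u) :
    (∃ x' y, t = x' ++ c₁ :: c₂ :: y ∧ w' = (u ++ x') ++ y) ∨
    (∃ x y, u = x ++ [c₁] ∧ t = c₂ :: y ∧ w' = x ++ y) := by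
  obtain ⟨x, y, e1, e2⟩ := delRule_applies_iff.1 happ
  have h : x ++ c₁ :: c₂ :: y = u ++ t := by
    rw [← hw]; simpa using e1.symm
  rcases split_two u h hc with ⟨x', hx, ht⟩ | ⟨h1, h2⟩
  · exact Or.inl ⟨x', y, ht, by simp [e2, hx]⟩
  · exact Or.inr ⟨x, y, h1, h2, e2⟩

/-- The six configuration shapes of the invariant. -/
def Sh1 (σ : Type) [Fintype σ] (T : Finset ℕ) (M : DFA ℕ σ) (w : Word) : Prop :=
  ∃ u : Word, JunkW σ T u ∧ w = u ++ [dol T (M.eval (strip T u))]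
def Sh2 (σ : Type) [Fintype σ] (T : Finset ℕ) (M : DFA ℕ σ) (w : Word) : Prop :=
  ∃ (u : Word) (q : σ) (a : ℕ), JunkW σ T u ∧ M.eval (strip T u) = q ∧ w = u ++ [xo T q a]
def Sh3 (σ : Type) [Fintype σ] (T : Finset ℕ) (M : DFA ℕ σ) (w : Word) : Prop :=
  ∃ u : Word, JunkW σ T u ∧ ((∀ s ∈ u, s ∈ T) → M.eval u ∈ M.accept) ∧ w = u
def Sh4 (σ : Type) [Fintype σ] (T : Finset ℕ) (M : DFA ℕ σ) (w : Word) : Prop :=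
  ∃ (u : Word) (q : σ) (a : ℕ), JunkW σ T u ∧ M.eval (strip T u) = q ∧
    w = u ++ [xo T q a, xt T q a, dol T q]
def Sh5 (σ : Type) [Fintype σ] (T : Finset ℕ) (M : DFA ℕ σ) (w : Word) : Prop :=
  ∃ (u : Word) (q : σ) (a : ℕ), a ∈ T ∧ JunkW σ T u ∧ M.eval (strip T u) = q ∧
    w = u ++ [a, dol T (M.step q a), xo T q a]
def Sh6 (σ : Type) [Fintype σ] (T : Finset ℕ) (M : DFA ℕ σ) (w : Word) : Prop :=
  ∃ (u : Word) (q : σ), q ∈ M.accept ∧ JunkW σ T u ∧ M.eval (strip T u) = q ∧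
    w = u ++ [vv T q, dol T q]

/-- The invariant of the simulation. -/
def Inv (σ : Type) [Fintype σ] (T : Finset ℕ) (M : DFA ℕ σ) (c : Word × ℕ) : Prop :=
  (c.2 = 1 ∧ (Sh1 σ T M c.1 ∨ Sh2 σ T M c.1 ∨ Sh3 σ T M c.1)) ∨
  (c.2 = 2 ∧ (Sh4 σ T M c.1 ∨ Sh5 σ T M c.1 ∨ Sh6 σ T M c.1))

theorem Rs_wf {M : DFA ℕ σ} : ∀ r ∈ Rs T M, r.1 ∈ Finset.Icc 1 2 ∧ r.2.2 ∈ Finset.Icc 1 2 ∧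
    r.2.1.core ≠ [] ∧ (∀ a ∈ r.2.1.lctx, a ∈ Vs σ T) ∧
    (∀ a ∈ r.2.1.core, a ∈ Vs σ T) ∧ (∀ a ∈ r.2.1.rctx, a ∈ Vs σ T) := by
  intro r hr
  rcases mem_Rs.1 hr with ⟨q,a,ha,rfl⟩ | ⟨q,a,ha,rfl⟩ | ⟨q,a,ha,rfl⟩ | ⟨q,a,ha,rfl⟩ |
    ⟨q,hq,rfl⟩ | ⟨q,hq,rfl⟩ | rfl
  · exact ⟨by simp [rA1, Finset.mem_Icc], by simp [rA1, Finset.mem_Icc], by simp [rA1, insRule], by simp [rA1, insRule],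
      by simp [rA1, insRule]; exact ⟨xo_mem_Vs ha, xt_mem_Vs ha⟩,
      by simp [rA1, insRule]; exact dol_mem_Vs⟩
  · exact ⟨by simp [rA2, Finset.mem_Icc], by simp [rA2, Finset.mem_Icc], by simp [rA2, delRule], by simp [rA2, delRule],
      by simp [rA2, delRule]; exact ⟨xt_mem_Vs ha, dol_mem_Vs⟩,
      by simp [rA2, delRule]⟩
  · exact ⟨by simp [rA3, Finset.mem_Icc], by simp [rA3, Finset.mem_Icc], by simp [rA3, insRule], by simp [rA3, insRule],
      by simp [rA3, insRule]; exact ⟨mem_Vs_of_mem ha, dol_mem_Vs⟩,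
      by simp [rA3, insRule]; exact xo_mem_Vs ha⟩
  · exact ⟨by simp [rA4, Finset.mem_Icc], by simp [rA4, Finset.mem_Icc], by simp [rA4, delRule], by simp [rA4, delRule],
      by simp [rA4, delRule]; exact xo_mem_Vs ha,
      by simp [rA4, delRule]⟩
  · exact ⟨by simp [rB1, Finset.mem_Icc], by simp [rB1, Finset.mem_Icc], by simp [rB1, insRule], by simp [rB1, insRule],
      by simp [rB1, insRule]; exact vv_mem_Vs,
      by simp [rB1, insRule]; exact dol_mem_Vs⟩
  · exact ⟨by simp [rB2, Finset.mem_Icc], by simp [rB2, Finset.mem_Icc], by simp [rB2, delRule], by simp [rB2, delRule],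
      by simp [rB2, delRule]; exact ⟨vv_mem_Vs, dol_mem_Vs⟩,
      by simp [rB2, delRule]⟩
  · exact ⟨by simp [rDum, Finset.mem_Icc], by simp [rDum, Finset.mem_Icc], by simp [rDum, insRule], by simp [rDum, insRule],
      by simp [rDum, insRule]; exact dum_mem_Vs,
      by simp [rDum, insRule]; exact dum_mem_Vs⟩

/-- The simulating GCID system. -/
noncomputable def Sys (σ : Type) [Fintype σ] (T : Finset ℕ) (M : DFA ℕ σ) : System where
  k := 2
  V := Vs σ T
  T := T
  axioms := {[dol T M.start]}
  i0 := 1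
  F := {1}
  R := Rs T M
  k_pos := by decide
  T_sub_V := by
    intro x hx; exact mem_Vs_of_mem hx
  axioms_over_V := by
    intro w hw a haw
    simp at hw
    subst hw
    simp at haw
    subst haw
    exact dol_mem_Vs
  i0_mem := by decide
  F_sub := by decide
  R_wf := Rs_wf

end ShapesAndSystem
section InvStep

open Finset

variable {σ : Type} [Fintype σ] {T : Finset ℕ} {M : DFA ℕ σ}

theorem inv_step {c c' : Word × ℕ}
    (hinv : Inv σ T M c) (hstep : Step (Sys σ T M) c c') : Inv σ T M c' := by
  obtain ⟨r, hr, h1, h2, happ⟩ := hstep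
  rcases mem_Rs.1 hr with ⟨q,a,ha,rfl⟩ | ⟨q,a,ha,rfl⟩ | ⟨q,a,ha,rfl⟩ | ⟨q,a,ha,rfl⟩ |
    ⟨q,hq,rfl⟩ | ⟨q,hq,rfl⟩ | rfl
  -- rule rA1 : C1→C2, insert [xo q a, xt q a] before dol q
  · have hc2 : c.2 = 1 := by simpa [rA1] using h1.symm
    have hc'2 : c'.2 = 2 := by simpa [rA1] using h2.symm
    have happ' : (insRule [] [xo T q a, xt T q a] [dol T q]).Applies c.1 c'.1 := happ
    rcases hinv with ⟨_, hsh⟩ | ⟨hbad, _⟩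
    swap
    · rw [hc2] at hbad; simp at hbad
    rcases hsh with ⟨u, hu, hw⟩ | ⟨u, q₂, a₂, hu, hq₂, hw⟩ | ⟨u, hu, hacc, hw⟩
    · -- Sh1 : match at the end
      obtain ⟨x', y, ht, hw'⟩ := ins_localize happ' hw (dol_not_mem_junk hu)
      rcases x' with _ | ⟨b, x'⟩
      · simp only [List.nil_append, List.cons.injEq] at ht
        obtain ⟨hd, hy⟩ := ht
        rw [dol_inj] at hd
        refine Or.inr ⟨hc'2, Or.inl ⟨u, q, a, hu, hd, ?_⟩⟩
        rw [hw', ← hy]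
        simp
      · exfalso
        simp only [List.cons_append, List.cons.injEq] at ht
        rcases ht with ⟨-, ht⟩
        exact absurd ht.symm (by simp)
    · -- Sh2 : no match
      exfalso
      obtain ⟨x', y, ht, -⟩ := ins_localize happ' hw (dol_not_mem_junk hu)
      rcases x' with _ | ⟨b, x'⟩ <;> simp at ht
    · -- Sh3 : no match
      exfalso
      obtain ⟨x', y, ht, -⟩ := ins_localize happ' (hw.trans (List.append_nil u).symm) (dol_not_mem_junk hu)
      simp at ht
  -- rule rA2 : C2→C1, delete [xt q a, dol q]
  · have hc2 : c.2 = 2 := by simpa [rA2] using h1.symm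
    have hc'2 : c'.2 = 1 := by simpa [rA2] using h2.symm
    have happ' : (delRule [] [xt T q a, dol T q] []).Applies c.1 c'.1 := happ
    rcases hinv with ⟨hbad, _⟩ | ⟨_, hsh⟩
    · rw [hc2] at hbad; simp at hbad
    rcases hsh with ⟨u, q₄, a₄, hu, hq₄, hw⟩ | ⟨u, q₅, a₅, ha₅, hu, hq₅, hw⟩ |
      ⟨u, q₆, hq₆a, hu, hq₆, hw⟩
    · -- Sh4 : match in the middle
      rcases del2_localize happ' hw (dol_not_mem_junk hu) with ⟨x', y, ht, hw'⟩ |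
        ⟨x, y, hx, ht, hw'⟩
      · rcases x' with _ | ⟨b1, x'⟩
        · exfalso; simp at ht
        rcases x' with _ | ⟨b2, x'⟩
        · -- surviving case
          simp only [List.cons_append, List.nil_append, List.cons.injEq] at ht
          obtain ⟨hb1, hx2, hd, hy⟩ := ht
          rw [xt_inj] at hx2
          refine Or.inl ⟨hc'2, Or.inr (Or.inl ⟨u, q₄, a₄, hu, hq₄, ?_⟩)⟩
          rw [hw', hb1, ← hy]
          simp
        · exfalso
          rcases x' with _ | ⟨b3, x'⟩ <;> simp at ht
      · exfalso
        simp at ht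
    · -- Sh5 : no match
      exfalso
      rcases del2_localize happ' hw (dol_not_mem_junk hu) with ⟨x', y, ht, -⟩ |
        ⟨x, y, hx, ht, -⟩
      · rcases x' with _ | ⟨b1, x'⟩
        · simp only [List.nil_append, List.cons.injEq] at ht
          exact absurd (ht.1 ▸ ha₅) xt_not_mem
        rcases x' with _ | ⟨b2, x'⟩
        · simp at ht
        rcases x' with _ | ⟨b3, x'⟩ <;> simp at ht
      · simp only [List.cons.injEq] at ht
        exact absurd (ht.1 ▸ ha₅) dol_not_mem
    · -- Sh6 : no match
      exfalso
      rcases del2_localize happ' hw (dol_not_mem_junk hu) with ⟨x', y, ht, -⟩ |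
        ⟨x, y, hx, ht, -⟩
      · rcases x' with _ | ⟨b1, x'⟩
        · simp at ht
        rcases x' with _ | ⟨b2, x'⟩ <;> simp at ht
      · simp at ht
  -- rule rA3 : C1→C2, insert [a, dol (step q a)] before xo q a
  · have hc2 : c.2 = 1 := by simpa [rA3] using h1.symm
    have hc'2 : c'.2 = 2 := by simpa [rA3] using h2.symm
    have happ' : (insRule [] [a, dol T (M.step q a)] [xo T q a]).Applies c.1 c'.1 := happ
    rcases hinv with ⟨_, hsh⟩ | ⟨hbad, _⟩
    swap
    · rw [hc2] at hbad; simp at hbad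
    rcases hsh with ⟨u, hu, hw⟩ | ⟨u, q₂, a₂, hu, hq₂, hw⟩ | ⟨u, hu, hacc, hw⟩
    · -- Sh1 : no match
      exfalso
      obtain ⟨x', y, ht, -⟩ := ins_localize happ' hw (xo_not_mem_junk hu)
      rcases x' with _ | ⟨b, x'⟩ <;> simp at ht
    · -- Sh2 : match
      obtain ⟨x', y, ht, hw'⟩ := ins_localize happ' hw (xo_not_mem_junk hu)
      rcases x' with _ | ⟨b, x'⟩
      · simp only [List.nil_append, List.cons.injEq] at ht
        obtain ⟨hd, hy⟩ := ht
        rw [xo_inj] at hd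
        obtain ⟨hqq, haa⟩ := hd
        refine Or.inr ⟨hc'2, Or.inr (Or.inl ⟨u, q, a, ha, hu, by rw [hq₂, hqq], ?_⟩)⟩
        rw [hw', ← hy]
        simp
      · exfalso
        simp only [List.cons_append, List.cons.injEq] at ht
        rcases ht with ⟨-, ht⟩
        exact absurd ht.symm (by simp)
    · -- Sh3 : no match
      exfalso
      obtain ⟨x', y, ht, -⟩ := ins_localize happ' (hw.trans (List.append_nil u).symm) (xo_not_mem_junk hu)
      simp at ht
  -- rule rA4 : C2→C1, delete [xo q a]
  · have hc2 : c.2 = 2 := by simpa [rA4] using h1.symm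
    have hc'2 : c'.2 = 1 := by simpa [rA4] using h2.symm
    have happ' : (delRule [] [xo T q a] []).Applies c.1 c'.1 := happ
    rcases hinv with ⟨hbad, _⟩ | ⟨_, hsh⟩
    · rw [hc2] at hbad; simp at hbad
    rcases hsh with ⟨u, q₄, a₄, hu, hq₄, hw⟩ | ⟨u, q₅, a₅, ha₅, hu, hq₅, hw⟩ |
      ⟨u, q₆, hq₆a, hu, hq₆, hw⟩
    · -- Sh4 : match at front of the tail
      obtain ⟨x', y, ht, hw'⟩ := del1_localize happ' hw (xo_not_mem_junk hu)
      rcases x' with _ | ⟨b1, x'⟩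
      · simp only [List.nil_append, List.cons.injEq] at ht
        obtain ⟨hd, hy⟩ := ht
        rw [xo_inj] at hd
        obtain ⟨hqq, haa⟩ := hd
        refine Or.inl ⟨hc'2, Or.inl ⟨u ++ [xt T q₄ a₄], junkW_append_xt hu, ?_⟩⟩
        rw [hw', ← hy]
        rw [strip_append_not_mem xt_not_mem, hq₄]
        simp
      · exfalso
        rcases x' with _ | ⟨b2, x'⟩
        · simp at ht
        rcases x' with _ | ⟨b3, x'⟩ <;> simp at ht
    · -- Sh5 : match at the end
      obtain ⟨x', y, ht, hw'⟩ := del1_localize happ' hw (xo_not_mem_junk hu)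
      rcases x' with _ | ⟨b1, x'⟩
      · exfalso
        simp only [List.nil_append, List.cons.injEq] at ht
        exact absurd (ht.1 ▸ ha₅) xo_not_mem
      rcases x' with _ | ⟨b2, x'⟩
      · exfalso; simp at ht
      rcases x' with _ | ⟨b3, x'⟩
      · -- surviving case
        simp only [List.cons_append, List.nil_append, List.cons.injEq] at ht
        obtain ⟨hb1, hb2, hd, hy⟩ := ht
        subst hb1
        subst hb2
        subst hy
        refine Or.inl ⟨hc'2, Or.inl ⟨u ++ [a₅], junkW_append_mem hu ha₅, ?_⟩⟩
        rw [hw', strip_append_mem ha₅, M.eval_append_singleton, hq₅]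
        simp
      · exfalso
        rcases x' with _ | ⟨b4, x'⟩ <;> simp at ht
    · -- Sh6 : no match
      exfalso
      obtain ⟨x', y, ht, -⟩ := del1_localize happ' hw (xo_not_mem_junk hu)
      rcases x' with _ | ⟨b1, x'⟩
      · simp at ht
      rcases x' with _ | ⟨b2, x'⟩ <;> simp at ht
  -- rule rB1 : C1→C2, insert [vv q] before dol q
  · have hc2 : c.2 = 1 := by simpa [rB1] using h1.symm
    have hc'2 : c'.2 = 2 := by simpa [rB1] using h2.symm
    have happ' : (insRule [] [vv T q] [dol T q]).Applies c.1 c'.1 := happ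
    rcases hinv with ⟨_, hsh⟩ | ⟨hbad, _⟩
    swap
    · rw [hc2] at hbad; simp at hbad
    rcases hsh with ⟨u, hu, hw⟩ | ⟨u, q₂, a₂, hu, hq₂, hw⟩ | ⟨u, hu, hacc, hw⟩
    · -- Sh1 : match
      obtain ⟨x', y, ht, hw'⟩ := ins_localize happ' hw (dol_not_mem_junk hu)
      rcases x' with _ | ⟨b, x'⟩
      · simp only [List.nil_append, List.cons.injEq] at ht
        obtain ⟨hd, hy⟩ := ht
        rw [dol_inj] at hd
        refine Or.inr ⟨hc'2, Or.inr (Or.inr ⟨u, q, hq, hu, hd, ?_⟩)⟩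
        rw [hw', ← hy]
        simp
      · exfalso
        simp only [List.cons_append, List.cons.injEq] at ht
        rcases ht with ⟨-, ht⟩
        exact absurd ht.symm (by simp)
    · -- Sh2 : no match
      exfalso
      obtain ⟨x', y, ht, -⟩ := ins_localize happ' hw (dol_not_mem_junk hu)
      rcases x' with _ | ⟨b, x'⟩ <;> simp at ht
    · -- Sh3 : no match
      exfalso
      obtain ⟨x', y, ht, -⟩ := ins_localize happ' (hw.trans (List.append_nil u).symm) (dol_not_mem_junk hu)
      simp at ht
  -- rule rB2 : C2→C1, delete [vv q, dol q]
  · have hc2 : c.2 = 2 := by simpa [rB2] using h1.symm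
    have hc'2 : c'.2 = 1 := by simpa [rB2] using h2.symm
    have happ' : (delRule [] [vv T q, dol T q] []).Applies c.1 c'.1 := happ
    rcases hinv with ⟨hbad, _⟩ | ⟨_, hsh⟩
    · rw [hc2] at hbad; simp at hbad
    rcases hsh with ⟨u, q₄, a₄, hu, hq₄, hw⟩ | ⟨u, q₅, a₅, ha₅, hu, hq₅, hw⟩ |
      ⟨u, q₆, hq₆a, hu, hq₆, hw⟩
    · -- Sh4 : no match
      exfalso
      rcases del2_localize happ' hw (dol_not_mem_junk hu) with ⟨x', y, ht, -⟩ |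
        ⟨x, y, hx, ht, -⟩
      · rcases x' with _ | ⟨b1, x'⟩
        · simp at ht
        rcases x' with _ | ⟨b2, x'⟩
        · simp at ht
        rcases x' with _ | ⟨b3, x'⟩ <;> simp at ht
      · simp at ht
    · -- Sh5 : no match
      exfalso
      rcases del2_localize happ' hw (dol_not_mem_junk hu) with ⟨x', y, ht, -⟩ |
        ⟨x, y, hx, ht, -⟩
      · rcases x' with _ | ⟨b1, x'⟩
        · simp only [List.nil_append, List.cons.injEq] at ht
          exact absurd (ht.1 ▸ ha₅) vv_not_mem
        rcases x' with _ | ⟨b2, x'⟩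
        · simp at ht
        rcases x' with _ | ⟨b3, x'⟩ <;> simp at ht
      · simp only [List.cons.injEq] at ht
        exact absurd (ht.1 ▸ ha₅) dol_not_mem
    · -- Sh6 : match
      rcases del2_localize happ' hw (dol_not_mem_junk hu) with ⟨x', y, ht, hw'⟩ |
        ⟨x, y, hx, ht, hw'⟩
      · rcases x' with _ | ⟨b1, x'⟩
        · -- surviving case
          simp only [List.nil_append, List.cons.injEq] at ht
          obtain ⟨hv, hd, hy⟩ := ht
          rw [vv_inj] at hv
          refine Or.inl ⟨hc'2, Or.inr (Or.inr ⟨u, hu, ?_, ?_⟩)⟩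
          · intro hall
            rw [strip_eq_self hall] at hq₆
            rw [hq₆]
            exact hq₆a
          · rw [hw', ← hy]
            simp
        · exfalso
          rcases x' with _ | ⟨b2, x'⟩ <;> simp at ht
      · exfalso
        simp at ht
  -- rule rDum : never applicable
  · exfalso
    have hc2 : c.2 = 1 := by simpa [rDum] using h1.symm
    have happ' : (insRule [] [dum T] [dum T]).Applies c.1 c'.1 := happ
    rcases hinv with ⟨_, hsh⟩ | ⟨hbad, _⟩
    swap
    · rw [hc2] at hbad; simp at hbad
    rcases hsh with ⟨u, hu, hw⟩ | ⟨u, q₂, a₂, hu, hq₂, hw⟩ | ⟨u, hu, hacc, hw⟩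
    · obtain ⟨x', y, ht, -⟩ := ins_localize happ' hw (dum_not_mem_junk hu)
      rcases x' with _ | ⟨b, x'⟩ <;> simp at ht
    · obtain ⟨x', y, ht, -⟩ := ins_localize happ' hw (dum_not_mem_junk hu)
      rcases x' with _ | ⟨b, x'⟩ <;> simp at ht
    · obtain ⟨x', y, ht, -⟩ := ins_localize happ' (hw.trans (List.append_nil u).symm) (dum_not_mem_junk hu)
      simp at ht

end InvStep
section Completeness

open Finset

variable {σ : Type} [Fintype σ] {T : Finset ℕ} {M : DFA ℕ σ}

theorem inv_derives {c c' : Word × ℕ} (h : Inv σ T M c)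
    (hd : Derives (Sys σ T M) c c') : Inv σ T M c' := by
  induction hd with
  | refl => exact h
  | tail _ hstep ih => exact inv_step ih hstep

theorem derives_sentential {w : Word} (hw : ∀ a ∈ w, a ∈ T) :
    Derives (Sys σ T M) ([dol T M.start], 1) (w ++ [dol T (M.eval w)], 1) := by
  induction w using List.reverseRecOn with
  | nil => exact Relation.ReflTransGen.refl
  | append_singleton u a ih =>
    have ha : a ∈ T := hw a (by simp)
    have hu : ∀ b ∈ u, b ∈ T := fun b hb => hw b (by simp [hb])
    have s1 : Step (Sys σ T M) (u ++ [dol T (M.eval u)], 1)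
        (u ++ [xo T (M.eval u) a, xt T (M.eval u) a, dol T (M.eval u)], 2) := by
      refine ⟨rA1 T (M.eval u) a, mem_Rs.2 (Or.inl ⟨M.eval u, a, ha, rfl⟩), rfl, rfl, ?_⟩
      exact insRule_applies_iff.2 ⟨u, [], by simp, by simp⟩
    have s2 : Step (Sys σ T M)
        (u ++ [xo T (M.eval u) a, xt T (M.eval u) a, dol T (M.eval u)], 2)
        (u ++ [xo T (M.eval u) a], 1) := by
      refine ⟨rA2 T (M.eval u) a, mem_Rs.2 (Or.inr (Or.inl ⟨M.eval u, a, ha, rfl⟩)),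
        rfl, rfl, ?_⟩
      exact delRule_applies_iff.2 ⟨u ++ [xo T (M.eval u) a], [], by simp, by simp⟩
    have s3 : Step (Sys σ T M) (u ++ [xo T (M.eval u) a], 1)
        (u ++ [a, dol T (M.step (M.eval u) a), xo T (M.eval u) a], 2) := by
      refine ⟨rA3 T M (M.eval u) a,
        mem_Rs.2 (Or.inr (Or.inr (Or.inl ⟨M.eval u, a, ha, rfl⟩))), rfl, rfl, ?_⟩
      exact insRule_applies_iff.2 ⟨u, [], by simp, by simp⟩
    have s4 : Step (Sys σ T M)
        (u ++ [a, dol T (M.step (M.eval u) a), xo T (M.eval u) a], 2)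
        (u ++ [a, dol T (M.step (M.eval u) a)], 1) := by
      refine ⟨rA4 T (M.eval u) a,
        mem_Rs.2 (Or.inr (Or.inr (Or.inr (Or.inl ⟨M.eval u, a, ha, rfl⟩)))), rfl, rfl, ?_⟩
      exact delRule_applies_iff.2 ⟨u ++ [a, dol T (M.step (M.eval u) a)], [], by simp, by simp⟩
    have : Derives (Sys σ T M) ([dol T M.start], 1)
        (u ++ [a, dol T (M.step (M.eval u) a)], 1) :=
      ((((ih hu).tail s1).tail s2).tail s3).tail s4
    rw [M.eval_append_singleton]
    simpa using this

theorem derives_final {w : Word} (hw : ∀ a ∈ w, a ∈ T) (hacc : M.eval w ∈ M.accept) :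
    Derives (Sys σ T M) ([dol T M.start], 1) (w, 1) := by
  have s5 : Step (Sys σ T M) (w ++ [dol T (M.eval w)], 1)
      (w ++ [vv T (M.eval w), dol T (M.eval w)], 2) := by
    refine ⟨rB1 T (M.eval w),
      mem_Rs.2 (Or.inr (Or.inr (Or.inr (Or.inr (Or.inl ⟨M.eval w, hacc, rfl⟩))))),
      rfl, rfl, ?_⟩
    exact insRule_applies_iff.2 ⟨w, [], by simp, by simp⟩
  have s6 : Step (Sys σ T M) (w ++ [vv T (M.eval w), dol T (M.eval w)], 2) (w, 1) := by
    refine ⟨rB2 T (M.eval w),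
      mem_Rs.2 (Or.inr (Or.inr (Or.inr (Or.inr (Or.inr (Or.inl ⟨M.eval w, hacc, rfl⟩)))))),
      rfl, rfl, ?_⟩
    exact delRule_applies_iff.2 ⟨w, [], by simp, by simp⟩
  exact ((derives_sentential hw).tail s5).tail s6

end Completeness
/-- Every regular language (over a finite alphabet) is generated by a
star-controlled GCID system of size `(2; 2, 0, 1; 2, 0, 0)` whose initial
component `C1` is also its only final component. -/
theorem regular_subset_gcid_s_2_201_200
    (L : Set Word) (hreg : Language.IsRegular (L : Language ℕ))
    (T : Finset ℕ) (hT : ∀ w ∈ L, ∀ a ∈ w, a ∈ T) :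
    ∃ S : System, StarControlled S ∧ HasSize S 2 2 0 1 2 0 0 ∧
      S.i0 = 1 ∧ S.F = {1} ∧ language S = L := by
  obtain ⟨σ, instF, M, hM⟩ := hreg
  letI := instF
  refine ⟨Sys σ T M, ⟨?_, ?_⟩, ⟨rfl, ?_⟩, rfl, rfl, ?_⟩
  · -- every rule matches the star pattern
    intro r hr
    refine ⟨2, by rw [show (Sys σ T M).k = 2 from rfl]; decide, ?_⟩
    rcases mem_Rs.1 hr with ⟨q,a,ha,rfl⟩ | ⟨q,a,ha,rfl⟩ | ⟨q,a,ha,rfl⟩ | ⟨q,a,ha,rfl⟩ |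
      ⟨q,hq,rfl⟩ | ⟨q,hq,rfl⟩ | rfl
    · rfl
    · show ({2, 1} : Finset ℕ) = {1, 2}; decide
    · rfl
    · show ({2, 1} : Finset ℕ) = {1, 2}; decide
    · rfl
    · show ({2, 1} : Finset ℕ) = {1, 2}; decide
    · rfl
  · -- the star is complete: there is a rule between C1 and C2
    intro i hi
    rw [show (Sys σ T M).k = 2 from rfl, Finset.mem_Icc] at hi
    obtain rfl : i = 2 := by omega
    exact ⟨rDum T, mem_Rs.2 (Or.inr (Or.inr (Or.inr (Or.inr (Or.inr (Or.inr rfl)))))), rfl⟩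
  · -- size bounds
    intro r hr
    rcases mem_Rs.1 hr with ⟨q,a,ha,rfl⟩ | ⟨q,a,ha,rfl⟩ | ⟨q,a,ha,rfl⟩ | ⟨q,a,ha,rfl⟩ |
      ⟨q,hq,rfl⟩ | ⟨q,hq,rfl⟩ | rfl
    · exact ⟨fun _ => by simp [rA1, insRule], fun h => by simp [rA1, insRule] at h⟩
    · exact ⟨fun h => by simp [rA2, delRule] at h, fun _ => by simp [rA2, delRule]⟩
    · exact ⟨fun _ => by simp [rA3, insRule], fun h => by simp [rA3, insRule] at h⟩
    · exact ⟨fun h => by simp [rA4, delRule] at h, fun _ => by simp [rA4, delRule]⟩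
    · exact ⟨fun _ => by simp [rB1, insRule], fun h => by simp [rB1, insRule] at h⟩
    · exact ⟨fun h => by simp [rB2, delRule] at h, fun _ => by simp [rB2, delRule]⟩
    · exact ⟨fun _ => by simp [rDum, insRule], fun h => by simp [rDum, insRule] at h⟩
  · -- the generated language is L
    ext w
    constructor
    · rintro ⟨hwT, x, hx, f, hf, hder⟩
      have hx' : x = [dol T M.start] := by simpa [Sys] using hx
      have hf1 : f = 1 := by simpa [Sys] using hf
      subst hx'
      subst hf1
      have h0 : Inv σ T M ([dol T M.start], 1) :=
        Or.inl ⟨rfl, Or.inl ⟨[], junkW_nil, rfl⟩⟩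
      have hinv : Inv σ T M (w, 1) := inv_derives h0 hder
      rcases hinv with ⟨_, hsh⟩ | ⟨hbad, _⟩
      swap
      · simp at hbad
      rcases hsh with ⟨u, hu, hwu⟩ | ⟨u, q₂, a₂, hu, hq₂, hwu⟩ | ⟨u, hu, hfin, hwu⟩
      · exfalso
        have hwu' : w = u ++ [dol T (M.eval (strip T u))] := hwu
        have hm : dol T (M.eval (strip T u)) ∈ w := by rw [hwu']; simp
        exact dol_not_mem (hwT _ hm)
      · exfalso
        have hwu' : w = u ++ [xo T q₂ a₂] := hwu
        have hm : xo T q₂ a₂ ∈ w := by rw [hwu']; simp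
        exact xo_not_mem (hwT _ hm)
      · obtain rfl : w = u := hwu
        have hacc : M.eval w ∈ M.accept := hfin hwT
        have : w ∈ M.accepts := (M.mem_accepts).2 hacc
        rwa [hM] at this
    · intro hwL
      have hwT := hT w hwL
      have hacc : M.eval w ∈ M.accept := by
        have : w ∈ M.accepts := by rw [hM]; exact hwL
        exact (M.mem_accepts).1 this
      exact ⟨hwT, [dol T M.start], by simp [Sys], 1, by simp [Sys],
        derives_final hwT hacc⟩

end GCIDPaper
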